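/- For all integers j ≥ 1 and n ≥ 0, the diminishing-exploration schedule satisfies u_{j+n} ≤ (√(u_j) + n·(K/(2α) + 1))². -/

import Mathlib

/-- For the diminishing-exploration schedule `u` (with parameters
`K ≥ 1`, `α > 0`), for all `j ≥ 1` and `n ≥ 0` one has
`u (j+n) ≤ (√(u j) + n·(K/(2α) + 1))²`. -/
theorem diminishing_exploration_iterated_upper_bound
    (K α : ℝ) (hK : 1 ≤ K) (hα : 0 < α) (u : ℕ → ℝ)
    (h1 : u 1 = ((⌈(α - K / (4 * α)) ^ 2⌉ : ℤ) : ℝ))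
    (hrec : ∀ n : ℕ, 2 ≤ n →
      u n = ((⌈u (n - 1) + (K / α) * Real.sqrt (u (n - 1)) + K ^ 2 / (4 * α ^ 2)⌉ : ℤ) : ℝ)) :
    ∀ j : ℕ, 1 ≤ j → ∀ n : ℕ,
      u (j + n) ≤ (Real.sqrt (u j) + (n : ℝ) * (K / (2 * α) + 1)) ^ 2 := by
  have hKpos : 0 < K := lt_of_lt_of_le one_pos hK
  have ha : 0 ≤ K / (2 * α) := by positivity
  -- nonnegativity of u m for m ≥ 1
  have hnn : ∀ m : ℕ, 1 ≤ m → 0 ≤ u m := by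
    intro m hm
    induction m with
    | zero => omega
    | succ k ih =>
      rcases Nat.eq_or_lt_of_le hm with h | h
      · rw [← h, h1]
        exact_mod_cast Int.ceil_nonneg (by positivity)
      · have hk1 : 1 ≤ k := by omega
        have h2 : 2 ≤ k + 1 := by omega
        have := hrec (k + 1) h2
        simp only [Nat.add_sub_cancel] at this
        rw [this]
        have hx : (0:ℝ) ≤ u k + (K / α) * Real.sqrt (u k) + K ^ 2 / (4 * α ^ 2) := by
          have := ih hk1
          have hs : 0 ≤ Real.sqrt (u k) := Real.sqrt_nonneg _
          positivity
        exact_mod_cast Int.ceil_nonneg hx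
  -- one-step bound
  have step : ∀ m : ℕ, 1 ≤ m →
      u (m + 1) ≤ (Real.sqrt (u m) + (K / (2 * α) + 1)) ^ 2 := by
    intro m hm
    have h2 : 2 ≤ m + 1 := by omega
    have hr := hrec (m + 1) h2
    simp only [Nat.add_sub_cancel] at hr
    have hum := hnn m hm
    have hs : 0 ≤ Real.sqrt (u m) := Real.sqrt_nonneg _
    have hsq : Real.sqrt (u m) ^ 2 = u m := Real.sq_sqrt hum
    have hceil : ((⌈u m + (K / α) * Real.sqrt (u m) + K ^ 2 / (4 * α ^ 2)⌉ : ℤ) : ℝ)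
        < u m + (K / α) * Real.sqrt (u m) + K ^ 2 / (4 * α ^ 2) + 1 := Int.ceil_lt_add_one _
    rw [hr]
    refine le_of_lt (lt_of_lt_of_le hceil ?_)
    have hKa : K / α = 2 * (K / (2 * α)) := by field_simp
    have hK2 : K ^ 2 / (4 * α ^ 2) = (K / (2 * α)) ^ 2 := by field_simp; ring
    rw [hKa, hK2]
    nlinarith [sq_nonneg (Real.sqrt (u m) + K / (2 * α)), hs, ha]
  -- induction
  intro j hj n
  induction n with
  | zero =>
    simp [Real.sq_sqrt (hnn j hj)]
  | succ n ih =>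
    have hjn : 1 ≤ j + n := by omega
    have h1' : u (j + n + 1) ≤ (Real.sqrt (u (j + n)) + (K / (2 * α) + 1)) ^ 2 :=
      step (j + n) hjn
    have hbound : Real.sqrt (u (j + n)) ≤ Real.sqrt (u j) + (n : ℝ) * (K / (2 * α) + 1) := by
      have hb : 0 ≤ Real.sqrt (u j) + (n : ℝ) * (K / (2 * α) + 1) := by positivity
      have := Real.sqrt_le_sqrt ih
      calc Real.sqrt (u (j + n)) ≤ Real.sqrt ((Real.sqrt (u j) + (n : ℝ) * (K / (2 * α) + 1)) ^ 2) := this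
        _ = Real.sqrt (u j) + (n : ℝ) * (K / (2 * α) + 1) := by
            rw [Real.sqrt_sq hb]
    have hs1 : 0 ≤ Real.sqrt (u (j + n)) := Real.sqrt_nonneg _
    have : (Real.sqrt (u (j + n)) + (K / (2 * α) + 1)) ^ 2
        ≤ (Real.sqrt (u j) + ((n : ℝ) + 1) * (K / (2 * α) + 1)) ^ 2 := by
      have hc : 0 ≤ K / (2 * α) + 1 := by positivity
      have h3 : 0 ≤ Real.sqrt (u (j + n)) + (K / (2 * α) + 1) := by positivity
      have h4 : Real.sqrt (u (j + n)) + (K / (2 * α) + 1)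
          ≤ Real.sqrt (u j) + ((n : ℝ) + 1) * (K / (2 * α) + 1) := by nlinarith
      exact pow_le_pow_left₀ h3 h4 2
    have hfinal := le_trans h1' this
    calc u (j + (n + 1)) = u (j + n + 1) := by ring_nf
      _ ≤ _ := hfinal
      _ = (Real.sqrt (u j) + ((n + 1 : ℕ) : ℝ) * (K / (2 * α) + 1)) ^ 2 := by push_cast; ring
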